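/- Let k ≥ 2, m ≥ 1, and let w* ∈ ℝ^m be nonzero. Then w = 0 is a strict local maximum of the no-overlap population loss ℓ: there exists r > 0 such that for every w with 0 < ‖w‖ < r, ℓ(w) < ℓ(0). -/
import Mathlib


open scoped RealInnerProductSpace
open InnerProductGeometry Real

/-- The ReLU function `σ(z) = max{z, 0}`. -/
noncomputable def relu (z : ℝ) : ℝ := max z 0

/-- `g u v = (1/(2π))·‖u‖·‖v‖·(sin θ_{u,v} + (π − θ_{u,v})·cos θ_{u,v})`. -/
noncomputable def g {E : Type*} [NormedAddCommGroup E] [InnerProductSpace ℝ E]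
    (u v : E) : ℝ :=
  (1 / (2 * π)) * ‖u‖ * ‖v‖ *
    (Real.sin (angle u v) + (π - angle u v) * Real.cos (angle u v))

/-- The no-overlap population loss
`ℓ(w) = (1/k²)·(γ‖w‖² − 2k·g(w,w*) − 2β‖w‖‖w*‖ + γ‖w*‖²)`,
where `β = (k²−k)/(2π)` and `γ = β + k/2`. -/
noncomputable def nol {m : ℕ} (k : ℕ) (ws : EuclideanSpace ℝ (Fin m))
    (w : EuclideanSpace ℝ (Fin m)) : ℝ :=
  (1 / (k : ℝ) ^ 2) *
    (((((k : ℝ) ^ 2 - k) / (2 * π)) + (k : ℝ) / 2) * ‖w‖ ^ 2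
      - 2 * (k : ℝ) * g w ws
      - 2 * (((k : ℝ) ^ 2 - k) / (2 * π)) * ‖w‖ * ‖ws‖
      + ((((k : ℝ) ^ 2 - k) / (2 * π)) + (k : ℝ) / 2) * ‖ws‖ ^ 2)

lemma aux_sin_add (θ : ℝ) (h0 : 0 ≤ θ) (hπ : θ ≤ π) :
    0 ≤ Real.sin θ + (π - θ) * Real.cos θ := by
  rcases le_or_gt 0 (Real.cos θ) with hc | hc
  · have hs := Real.sin_nonneg_of_nonneg_of_le_pi h0 hπ
    nlinarith
  · have hθ : π / 2 < θ := by
      by_contra h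
      push_neg at h
      exact absurd (Real.cos_nonneg_of_mem_Icc ⟨by linarith [Real.pi_pos], h⟩) hc.not_ge
    rcases eq_or_lt_of_le hπ with hθπ | hθπ
    · simp [hθπ]
    · set φ := π - θ with hφ
      have hφ0 : 0 < φ := by simp [hφ]; linarith
      have hφlt : φ < π / 2 := by simp [hφ]; linarith
      have hcosφ : 0 < Real.cos φ := Real.cos_pos_of_mem_Ioo ⟨by linarith, hφlt⟩
      have htan := Real.lt_tan hφ0 hφlt
      rw [Real.tan_eq_sin_div_cos] at htan
      have hmul : φ * Real.cos φ < Real.sin φ := by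
        rw [lt_div_iff₀ hcosφ] at htan; linarith
      have hs : Real.sin θ = Real.sin φ := by rw [hφ, Real.sin_pi_sub]
      have hc' : Real.cos θ = - Real.cos φ := by rw [hφ, Real.cos_pi_sub]; ring
      rw [hs, hc']
      nlinarith

lemma aux_g_nonneg {E : Type*} [NormedAddCommGroup E] [InnerProductSpace ℝ E]
    (u v : E) : 0 ≤ g u v := by
  unfold g
  have h1 := angle_nonneg u v
  have h2 := angle_le_pi u v
  have h3 := aux_sin_add (angle u v) h1 h2
  have hπ := Real.pi_pos
  positivity

/-- For `k ≥ 2`, `w = 0` is a strict local maximum of the no-overlap population loss `ℓ`: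
there is `r > 0` such that `ℓ(w) < ℓ(0)` whenever `0 < ‖w‖ < r`. -/
theorem stmt4 (k m : ℕ) (hk : 2 ≤ k) (hm : 1 ≤ m)
    (ws : EuclideanSpace ℝ (Fin m)) (hws : ws ≠ 0) :
    ∃ r > 0, ∀ w : EuclideanSpace ℝ (Fin m),
      0 < ‖w‖ → ‖w‖ < r → nol k ws w < nol k ws 0 := by
  have hπ := Real.pi_pos
  have hk2 : (2:ℝ) ≤ k := by exact_mod_cast hk
  set β : ℝ := ((k : ℝ) ^ 2 - k) / (2 * π) with hβ
  set γ : ℝ := β + (k : ℝ) / 2 with hγ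
  have hβ0 : 0 < β := by
    apply div_pos; nlinarith; linarith
  have hγ0 : 0 < γ := by
    have h2 : (0:ℝ) < (k:ℝ)/2 := by linarith
    exact add_pos hβ0 h2
  have hb : 0 < ‖ws‖ := norm_pos_iff.mpr hws
  refine ⟨β * ‖ws‖ / γ, by positivity, fun w ha har => ?_⟩
  have hG := aux_g_nonneg w ws
  have hk0 : (0:ℝ) < (k:ℝ)^2 := by positivity
  have h0 : nol k ws 0 = (1 / (k:ℝ)^2) * (γ * ‖ws‖^2) := by
    simp [nol, g, hβ, hγ]
  rw [h0]
  unfold nol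
  rw [← hβ, ← hγ]
  apply mul_lt_mul_of_pos_left _ (by positivity : (0:ℝ) < 1/(k:ℝ)^2)
  have har' : γ * ‖w‖ < β * ‖ws‖ := by
    rw [lt_div_iff₀ hγ0] at har
    nlinarith
  nlinarith
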